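/- On k[Y_∞], the free k-vector space on planar binary trees, define a bilinear product * by 1 * T = T = T * 1 and, for trees T = λ(T_1,T_2) and S = λ(S_1,S_2), T * S = λ(T_1, T_2 * S) + λ(T * S_1, S_2). Then * is associative with two-sided unit the single-leaf tree 1 (the Loday–Ronco product). -/

import Mathlib

/- STATEMENT 16: the Loday–Ronco associative product on the linear span of
planar binary trees. -/

inductive BTree : Type
  | leaf : BTree
  | node : BTree → BTree → BTree
  deriving DecidableEq

noncomputable section

open Finsupp

variable {K : Type*} [Field K]

/-- graft a linear combination on the left slot of a node. -/
def nodeL (x : BTree →₀ K) (b : BTree) : BTree →₀ K :=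
  x.sum fun u c => Finsupp.single (BTree.node u b) c

/-- graft a linear combination on the right slot of a node. -/
def nodeR (a : BTree) (x : BTree →₀ K) : BTree →₀ K :=
  x.sum fun u c => Finsupp.single (BTree.node a u) c

/-- the Loday-Ronco product on basis trees:
`1 * T = T = T * 1` and `λ(T₁,T₂) * λ(S₁,S₂) = λ(T₁, T₂*S) + λ(T*S₁, S₂)`. -/
def mulT : BTree → BTree → (BTree →₀ K)
  | .leaf, t => Finsupp.single t 1
  | .node a b, .leaf => Finsupp.single (BTree.node a b) 1
  | .node a b, .node c d =>
      nodeR a (mulT b (.node c d)) + nodeL (mulT (.node a b) c) d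
  termination_by s t => sizeOf s + sizeOf t
  decreasing_by
    all_goals simp
    all_goals omega

/-- bilinear extension of the product to `k[Y_∞]`. -/
def star (x y : BTree →₀ K) : BTree →₀ K :=
  x.sum fun s a => y.sum fun t b => (a * b) • mulT s t

lemma nodeR_eq (a : BTree) (x : BTree →₀ K) :
    nodeR a x = Finsupp.mapDomain (BTree.node a) x := rfl

lemma nodeL_eq (b : BTree) (x : BTree →₀ K) :
    nodeL x b = Finsupp.mapDomain (fun u => BTree.node u b) x := rfl

lemma nodeR_sum (a : BTree) (y : BTree →₀ K) (g : BTree → K → (BTree →₀ K)) :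
    nodeR a (y.sum g) = y.sum fun t b => nodeR a (g t b) := by
  simp only [nodeR_eq]
  exact map_finsuppSum (Finsupp.mapDomain.addMonoidHom (BTree.node a)) y g

lemma nodeL_sum (b : BTree) (y : BTree →₀ K) (g : BTree → K → (BTree →₀ K)) :
    nodeL (y.sum g) b = y.sum fun t c => nodeL (g t c) b := by
  simp only [nodeL_eq]
  exact map_finsuppSum (Finsupp.mapDomain.addMonoidHom (fun u => BTree.node u b)) y g

lemma nodeR_smul (a : BTree) (c : K) (x : BTree →₀ K) :
    nodeR a (c • x) = c • nodeR a x := by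
  simp only [nodeR_eq]; exact Finsupp.mapDomain_smul c x

lemma nodeL_smul (b : BTree) (c : K) (x : BTree →₀ K) :
    nodeL (c • x) b = c • nodeL x b := by
  simp only [nodeL_eq]; exact Finsupp.mapDomain_smul c x

lemma nodeR_add (a : BTree) (x y : BTree →₀ K) :
    nodeR a (x + y) = nodeR a x + nodeR a y := by
  simp only [nodeR_eq]; exact Finsupp.mapDomain_add

lemma nodeL_add (b : BTree) (x y : BTree →₀ K) :
    nodeL (x + y) b = nodeL x b + nodeL y b := by
  simp only [nodeL_eq]; exact Finsupp.mapDomain_add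

lemma nodeR_single (a u : BTree) (c : K) :
    nodeR a (Finsupp.single u c) = Finsupp.single (BTree.node a u) c := by
  simp only [nodeR_eq]; exact Finsupp.mapDomain_single

lemma nodeL_single (b u : BTree) (c : K) :
    nodeL (Finsupp.single u c) b = Finsupp.single (BTree.node u b) c := by
  simp only [nodeL_eq]; exact Finsupp.mapDomain_single

/-- general bilinear extension -/
def bext (f : BTree → BTree → (BTree →₀ K)) (x y : BTree →₀ K) : BTree →₀ K :=
  x.sum fun s a => y.sum fun t b => (a * b) • f s t

lemma star_eq_bext (x y : BTree →₀ K) : star x y = bext mulT x y := rfl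

lemma bext_single_left (f : BTree → BTree → (BTree →₀ K)) (s : BTree) (y : BTree →₀ K) :
    bext f (Finsupp.single s 1) y = y.sum fun t b => b • f s t := by
  unfold bext
  rw [Finsupp.sum_single_index]
  · simp
  · simp

lemma bext_single_right (f : BTree → BTree → (BTree →₀ K)) (x : BTree →₀ K) (t : BTree) :
    bext f x (Finsupp.single t 1) = x.sum fun s a => a • f s t := by
  unfold bext
  apply Finsupp.sum_congr
  intro s _
  rw [Finsupp.sum_single_index] <;> simp

lemma bext_single_single (f : BTree → BTree → (BTree →₀ K)) (s t : BTree) :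
    bext f (Finsupp.single s 1) (Finsupp.single t 1) = f s t := by
  rw [bext_single_left, Finsupp.sum_single_index] <;> simp

lemma bext_add_left (f : BTree → BTree → (BTree →₀ K)) (x y z : BTree →₀ K) :
    bext f (x + y) z = bext f x z + bext f y z := by
  unfold bext
  apply Finsupp.sum_add_index' <;> intros <;> simp [add_mul, add_smul, Finsupp.sum_add]

lemma bext_add_right (f : BTree → BTree → (BTree →₀ K)) (x y z : BTree →₀ K) :
    bext f x (y + z) = bext f x y + bext f x z := by
  unfold bext
  rw [← Finsupp.sum_add]
  apply Finsupp.sum_congr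
  intro s _
  apply Finsupp.sum_add_index' <;> intros <;> simp [mul_add, add_smul]

lemma bext_smul_left (f : BTree → BTree → (BTree →₀ K)) (c : K) (x y : BTree →₀ K) :
    bext f (c • x) y = c • bext f x y := by
  unfold bext
  rw [Finsupp.sum_smul_index', Finsupp.smul_sum]
  · apply Finsupp.sum_congr
    intro s _
    rw [Finsupp.smul_sum]
    apply Finsupp.sum_congr
    intro t _
    simp [smul_eq_mul, smul_smul, mul_assoc]
  · intro s; simp

lemma bext_smul_right (f : BTree → BTree → (BTree →₀ K)) (c : K) (x y : BTree →₀ K) :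
    bext f x (c • y) = c • bext f x y := by
  unfold bext
  rw [Finsupp.smul_sum]
  apply Finsupp.sum_congr
  intro s _
  rw [Finsupp.sum_smul_index', Finsupp.smul_sum]
  · apply Finsupp.sum_congr
    intro t _
    simp [smul_eq_mul, smul_smul, mul_left_comm]
  · intro t; simp

lemma bext_zero_left (f : BTree → BTree → (BTree →₀ K)) (y : BTree →₀ K) :
    bext f 0 y = 0 := by
  unfold bext; exact Finsupp.sum_zero_index

lemma bext_zero_right (f : BTree → BTree → (BTree →₀ K)) (x : BTree →₀ K) :
    bext f x 0 = 0 := by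
  unfold bext; simp

def precT : BTree → BTree → (BTree →₀ K)
  | .leaf, _ => 0
  | .node a b, t => nodeR a (mulT b t)

def succT : BTree → BTree → (BTree →₀ K)
  | _, .leaf => 0
  | s, .node c d => nodeL (mulT s c) d

lemma mulT_leaf_right (t : BTree) : mulT (K := K) t BTree.leaf = Finsupp.single t 1 := by
  cases t <;> simp [mulT]

lemma mulT_split : ∀ s t : BTree, s ≠ BTree.leaf ∨ t ≠ BTree.leaf →
    mulT (K := K) s t = precT s t + succT s t := by
  intro s t h
  match s, t with
  | .leaf, .leaf => simp at h
  | .leaf, .node c d =>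
      simp only [precT, succT, zero_add, mulT, nodeL_single]
  | .node a b, .leaf =>
      simp only [precT, succT, add_zero, mulT, mulT_leaf_right, nodeR_single]
  | .node a b, .node c d =>
      simp only [precT, succT, mulT]

def grf (x y : BTree →₀ K) : BTree →₀ K :=
  bext (fun s t => Finsupp.single (BTree.node s t) 1) x y

lemma grf_eq_left (y z : BTree →₀ K) : grf y z = y.sum fun u a => a • nodeR u z := by
  unfold grf bext nodeR
  apply Finsupp.sum_congr
  intro u _
  rw [Finsupp.smul_sum]
  apply Finsupp.sum_congr
  intro v _
  simp [Finsupp.smul_single, smul_eq_mul]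

lemma grf_eq_right (y z : BTree →₀ K) : grf y z = z.sum fun v b => b • nodeL y v := by
  unfold grf bext nodeL
  rw [Finsupp.sum_comm]
  apply Finsupp.sum_congr
  intro v _
  rw [Finsupp.smul_sum]
  apply Finsupp.sum_congr
  intro u _
  simp [Finsupp.smul_single, smul_eq_mul, mul_comm]

def prc (x y : BTree →₀ K) : BTree →₀ K := bext precT x y
def scc (x y : BTree →₀ K) : BTree →₀ K := bext succT x y

-- P1
lemma prc_single_node_left (a1 a2 : BTree) (y : BTree →₀ K) :
    prc (Finsupp.single (BTree.node a1 a2) 1) y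
      = nodeR a1 (star (Finsupp.single a2 1) y) := by
  rw [prc, bext_single_left, star_eq_bext, bext_single_left, nodeR_sum]
  apply Finsupp.sum_congr
  intro t _
  rw [precT, nodeR_smul]

-- P2
lemma prc_nodeR_left (a1 : BTree) (x : BTree →₀ K) (c : BTree) :
    prc (nodeR a1 x) (Finsupp.single c 1)
      = nodeR a1 (star x (Finsupp.single c 1)) := by
  rw [prc, bext_single_right, star_eq_bext, bext_single_right, nodeR_eq,
    Finsupp.sum_mapDomain_index (by intro u; simp) (by intros; rw [add_smul]), nodeR_sum]
  apply Finsupp.sum_congr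
  intro u _
  rw [precT, nodeR_smul]

-- G1
lemma prc_nodeL_left (y : BTree →₀ K) (b2 c : BTree) :
    prc (nodeL y b2) (Finsupp.single c 1) = grf y (mulT b2 c) := by
  rw [prc, bext_single_right, nodeL_eq,
    Finsupp.sum_mapDomain_index (by intro u; simp) (by intros; rw [add_smul]), grf_eq_left]
  apply Finsupp.sum_congr
  intro u _
  rw [precT]

-- G2
lemma scc_single_nodeR (a b1 : BTree) (z : BTree →₀ K) :
    scc (Finsupp.single a 1) (nodeR b1 z) = grf (mulT a b1) z := by
  rw [scc, bext_single_left, nodeR_eq,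
    Finsupp.sum_mapDomain_index (by intro u; simp) (by intros; rw [add_smul]), grf_eq_right]
  apply Finsupp.sum_congr
  intro v _
  rw [succT, nodeL_eq]

-- G3
lemma scc_single_nodeL (a : BTree) (w : BTree →₀ K) (c2 : BTree) :
    scc (Finsupp.single a 1) (nodeL w c2)
      = nodeL (star (Finsupp.single a 1) w) c2 := by
  rw [scc, bext_single_left, nodeL_eq,
    Finsupp.sum_mapDomain_index (by intro u; simp) (by intros; rw [add_smul]),
    star_eq_bext, bext_single_left, nodeL_sum]
  apply Finsupp.sum_congr
  intro v _
  rw [succT, nodeL_smul]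

-- G4
lemma scc_right_node (x : BTree →₀ K) (c1 c2 : BTree) :
    scc x (Finsupp.single (BTree.node c1 c2) 1)
      = nodeL (star x (Finsupp.single c1 1)) c2 := by
  rw [scc, bext_single_right, star_eq_bext, bext_single_right, nodeL_sum]
  apply Finsupp.sum_congr
  intro t _
  rw [succT, nodeL_smul]

lemma star_single_single (t s : BTree) :
    star (K := K) (Finsupp.single t 1) (Finsupp.single s 1) = mulT t s := by
  rw [star_eq_bext, bext_single_single]

lemma star_leaf_left (x : BTree →₀ K) :
    star (Finsupp.single BTree.leaf 1) x = x := by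
  rw [star_eq_bext, bext_single_left]
  conv_rhs => rw [← Finsupp.sum_single x]
  apply Finsupp.sum_congr
  intro t _
  simp [mulT, Finsupp.smul_single]

lemma star_leaf_right (x : BTree →₀ K) :
    star x (Finsupp.single BTree.leaf 1) = x := by
  rw [star_eq_bext, bext_single_right]
  conv_rhs => rw [← Finsupp.sum_single x]
  apply Finsupp.sum_congr
  intro t _
  simp [mulT_leaf_right, Finsupp.smul_single]

lemma star_split_right (x : BTree →₀ K) (c : BTree) (hc : c ≠ BTree.leaf) :
    star x (Finsupp.single c 1)
      = prc x (Finsupp.single c 1) + scc x (Finsupp.single c 1) := by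
  rw [star_eq_bext, bext_single_right, prc, bext_single_right, scc, bext_single_right,
    ← Finsupp.sum_add]
  apply Finsupp.sum_congr
  intro s _
  rw [mulT_split s c (Or.inr hc), smul_add]

lemma star_split_left (a : BTree) (y : BTree →₀ K) (ha : a ≠ BTree.leaf) :
    star (Finsupp.single a 1) y
      = prc (Finsupp.single a 1) y + scc (Finsupp.single a 1) y := by
  rw [star_eq_bext, bext_single_left, prc, bext_single_left, scc, bext_single_left,
    ← Finsupp.sum_add]
  apply Finsupp.sum_congr
  intro t _
  rw [mulT_split a t (Or.inl ha), smul_add]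

lemma prc_add_left (x y z : BTree →₀ K) : prc (x + y) z = prc x z + prc y z :=
  bext_add_left _ _ _ _

lemma scc_add_right (x y z : BTree →₀ K) : scc x (y + z) = scc x y + scc x z :=
  bext_add_right _ _ _ _

lemma key : ∀ n : ℕ, ∀ a b c : BTree, sizeOf a + sizeOf c ≤ n →
    star (K := K) (mulT a b) (Finsupp.single c 1)
      = star (Finsupp.single a 1) (mulT b c) := by
  intro n
  induction n with
  | zero =>
      intro a b c h
      exfalso
      cases a <;> simp at h
  | succ n ih =>
      intro a b c h
      match a, c with
      | .leaf, c =>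
          rw [show mulT (K := K) BTree.leaf b = Finsupp.single b 1 from by simp [mulT],
            star_single_single, star_leaf_left]
      | .node a1 a2, .leaf =>
          rw [star_leaf_right, mulT_leaf_right, star_single_single]
      | .node a1 a2, .node c1 c2 =>
          match b with
          | .leaf =>
              rw [mulT_leaf_right,
                show mulT (K := K) BTree.leaf (BTree.node c1 c2)
                  = Finsupp.single (BTree.node c1 c2) 1 from by simp [mulT]]
          | .node b1 b2 =>
              have ha2 : sizeOf a2 + sizeOf (BTree.node c1 c2) ≤ n := by
                simp only [BTree.node.sizeOf_spec] at h ⊢; omega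
              have hc1 : sizeOf (BTree.node a1 a2) + sizeOf c1 ≤ n := by
                simp only [BTree.node.sizeOf_spec] at h ⊢; omega
              have hkey1 := ih a2 (BTree.node b1 b2) (BTree.node c1 c2) ha2
              have hkey2 := ih (BTree.node a1 a2) (BTree.node b1 b2) c1 hc1
              rw [star_split_right _ _ (by simp), star_split_left _ _ (by simp),
                scc_right_node, hkey2,
                mulT_split (BTree.node a1 a2) (BTree.node b1 b2) (Or.inl (by simp)),
                prc_add_left]
              simp only [precT, succT]
              rw [prc_nodeR_left, hkey1, prc_nodeL_left, prc_single_node_left,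
                mulT_split (BTree.node b1 b2) (BTree.node c1 c2) (Or.inr (by simp)),
                scc_add_right]
              simp only [precT, succT]
              rw [scc_single_nodeR, scc_single_nodeL, add_assoc]

lemma star_add_left (x y z : BTree →₀ K) : star (x + y) z = star x z + star y z :=
  bext_add_left _ _ _ _

lemma star_add_right (x y z : BTree →₀ K) : star x (y + z) = star x y + star x z :=
  bext_add_right _ _ _ _

lemma star_smul_left (c : K) (x y : BTree →₀ K) : star (c • x) y = c • star x y :=
  bext_smul_left _ _ _ _

lemma star_smul_right (c : K) (x y : BTree →₀ K) : star x (c • y) = c • star x y :=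
  bext_smul_right _ _ _ _

lemma star_zero_left (y : BTree →₀ K) : star 0 y = 0 := bext_zero_left _ _

lemma star_zero_right (x : BTree →₀ K) : star x 0 = 0 := bext_zero_right _ _

lemma star_assoc (x y z : BTree →₀ K) : star (star x y) z = star x (star y z) := by
  induction x using Finsupp.induction_linear with
  | zero => simp only [star_zero_left, star_zero_right]
  | add f g hf hg => rw [star_add_left, star_add_left, star_add_left, hf, hg]
  | single s a =>
    induction y using Finsupp.induction_linear with
    | zero => simp only [star_zero_left, star_zero_right]
    | add f g hf hg =>
        rw [star_add_right, star_add_left, star_add_left, star_add_right, hf, hg]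
    | single t b =>
      induction z using Finsupp.induction_linear with
      | zero => simp only [star_zero_left, star_zero_right]
      | add f g hf hg => rw [star_add_right, star_add_right, star_add_right, hf, hg]
      | single u c =>
          have hs : (Finsupp.single s a : BTree →₀ K) = a • Finsupp.single s 1 := by
            simp [Finsupp.smul_single]
          have ht : (Finsupp.single t b : BTree →₀ K) = b • Finsupp.single t 1 := by
            simp [Finsupp.smul_single]
          have hu : (Finsupp.single u c : BTree →₀ K) = c • Finsupp.single u 1 := by
            simp [Finsupp.smul_single]
          have base : star (star (Finsupp.single s 1) (Finsupp.single t 1))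
              (Finsupp.single u (1 : K))
              = star (Finsupp.single s 1) (star (Finsupp.single t 1) (Finsupp.single u 1)) := by
            rw [star_single_single, star_single_single,
              key (sizeOf s + sizeOf u) s t u le_rfl]
          rw [hs, ht, hu]
          simp only [star_smul_left, star_smul_right, smul_smul, base, mul_assoc,
            mul_comm, mul_left_comm]


theorem loday_ronco_product_associative_unital :
    (∀ T S : BTree,
        star (K := K) (Finsupp.single T 1) (Finsupp.single S 1) = mulT T S) ∧
    (∀ x : BTree →₀ K, star (Finsupp.single BTree.leaf 1) x = x) ∧
    (∀ x : BTree →₀ K, star x (Finsupp.single BTree.leaf 1) = x) ∧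
    (∀ x y z : BTree →₀ K, star (star x y) z = star x (star y z)) :=
  ⟨star_single_single, star_leaf_left, star_leaf_right, star_assoc⟩

end
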